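/- arXiv:2602.01453 — 4 statements merged into one kernel-verified Lean document; each statement's English description precedes it below -/
import Mathlib

section
/- Let S be a finite type, H a natural number, and α ≥ 0. Let (M_h)_{h<H} and (M'_h)_{h<H} be matrices S → S → ℝ such that each M'_h is substochastic (all entries nonnegative and every row sums to at most 1). Let q₀ = q'₀ : S → ℝ be a common initial vector and define occupancy vectors recursively by q_{h+1} := q_h ⬝ M_h and q'_{h+1} := q'_h ⬝ M'_h. Suppose that for every h < H the following implication holds: if ‖q_h − q'_h‖₁ ≤ α·h then ‖q_h ⬝ (M_h − M'_h)‖₁ ≤ α. Then for every h ≤ H, ‖q_h − q'_h‖₁ ≤ α·h. -/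
/-- Occupancy-measure error accumulation. If the per-step
policy-weighted model error is at most `α` whenever the current occupancy
error is at most `α·h`, then for every `h ≤ H` the occupancy error at step `h`
is at most `α·h`. -/
theorem occupancy_error_accumulation {S : Type*} [Fintype S]
    (H : ℕ) (α : ℝ) (hα : 0 ≤ α)
    (M M' : ℕ → S → S → ℝ)
    (hM'nn : ∀ h < H, ∀ s s', 0 ≤ M' h s s')
    (hM'row : ∀ h < H, ∀ s, ∑ s', M' h s s' ≤ 1)
    (q q' : ℕ → S → ℝ)
    (hq0 : q 0 = q' 0)
    (hqrec : ∀ h < H, ∀ s', q (h + 1) s' = ∑ s, q h s * M h s s')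
    (hq'rec : ∀ h < H, ∀ s', q' (h + 1) s' = ∑ s, q' h s * M' h s s')
    (hstep : ∀ h < H, (∑ s, |q h s - q' h s| ≤ α * h) →
      ∑ s', |∑ s, q h s * (M h s s' - M' h s s')| ≤ α) :
    ∀ h ≤ H, ∑ s, |q h s - q' h s| ≤ α * h := by
  intro h hh
  induction h with
  | zero => simp [hq0]
  | succ n ih =>
    have hn : n < H := hh
    have ihn : ∑ s, |q n s - q' n s| ≤ α * n := ih (le_of_lt hn)
    have key : ∀ s', q (n + 1) s' - q' (n + 1) s' =
        (∑ s, q n s * (M n s s' - M' n s s')) +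
        ∑ s, (q n s - q' n s) * M' n s s' := by
      intro s'
      rw [hqrec n hn s', hq'rec n hn s']
      rw [← Finset.sum_add_distrib, ← Finset.sum_sub_distrib]
      congr 1; ext s; ring
    calc ∑ s', |q (n + 1) s' - q' (n + 1) s'|
        ≤ (∑ s', |∑ s, q n s * (M n s s' - M' n s s')|) +
          ∑ s', |∑ s, (q n s - q' n s) * M' n s s'| := by
          rw [← Finset.sum_add_distrib]
          apply Finset.sum_le_sum
          intro s' _
          rw [key s']
          exact abs_add_le _ _
      _ ≤ α + α * n := by
          apply add_le_add (hstep n hn ihn)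
          calc ∑ s', |∑ s, (q n s - q' n s) * M' n s s'|
              ≤ ∑ s', ∑ s, |q n s - q' n s| * M' n s s' := by
                apply Finset.sum_le_sum
                intro s' _
                refine (Finset.abs_sum_le_sum_abs _ _).trans ?_
                apply Finset.sum_le_sum
                intro s _
                rw [abs_mul, abs_of_nonneg (hM'nn n hn s s')]
            _ = ∑ s, |q n s - q' n s| * ∑ s', M' n s s' := by
                rw [Finset.sum_comm]
                simp [Finset.mul_sum]
            _ ≤ ∑ s, |q n s - q' n s| * 1 := by
                apply Finset.sum_le_sum
                intro s _
                exact mul_le_mul_of_nonneg_left (hM'row n hn s) (abs_nonneg _)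
            _ ≤ α * n := by simpa using ihn
      _ ≤ α * ((n + 1 : ℕ) : ℝ) := by push_cast; linarith
end

section
/- Let S be a finite type with |S| elements, H ≥ 1 a natural number, and β ≥ 0. Let (M_h)_{h<H} be row-stochastic matrices S → S → ℝ (all entries nonnegative and every row sums to exactly 1), let q₀ : S → ℝ be a probability vector (nonnegative entries summing to 1), and let (S_h)_{h<H} be subsets of S. Let q_h be the untruncated occupancy vectors and q^{S·}_h the truncated occupancy vectors, both starting from q₀. Suppose that for every h < H and every s ∉ S_h, q^{S·}_h s ≤ 2β. Then for every family of reward functions f_h : S → ℝ with 0 ≤ f_h s ≤ 1, ∑_{h<H} ∑_{s∈S} f_h s * q_h s ≤ ∑_{h<H} ∑_{s∈S_h} f_h s * q^{S·}_h s + 2β · H² · |S|; i.e., the value under the true dynamics exceeds the value under the truncated dynamics by at most 2β·H²·|S|. -/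
/-- The value under the true (row-stochastic) dynamics exceeds the
value under the truncated dynamics by at most `2β·H²·|S|`, provided every state
truncated away at each timestep has (truncated) reachability probability at most
`2β`. -/
theorem full_value_le_truncated_value_add_error {S : Type*} [Fintype S] [DecidableEq S]
    (H : ℕ) (hH : 1 ≤ H) (β : ℝ) (hβ : 0 ≤ β)
    (M : ℕ → S → S → ℝ)
    (hMnn : ∀ h < H, ∀ s s', 0 ≤ M h s s')
    (hMrow : ∀ h < H, ∀ s, ∑ s', M h s s' = 1)
    (q₀ : S → ℝ) (hq₀nn : ∀ s, 0 ≤ q₀ s) (hq₀sum : ∑ s, q₀ s = 1)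
    (Sh : ℕ → Finset S)
    (q qS : ℕ → S → ℝ)
    (hq0 : q 0 = q₀) (hqS0 : qS 0 = q₀)
    (hqrec : ∀ h < H, ∀ s', q (h + 1) s' = ∑ s, q h s * M h s s')
    (hqSrec : ∀ h < H, ∀ s', qS (h + 1) s' = ∑ s ∈ Sh h, qS h s * M h s s')
    (htrunc : ∀ h < H, ∀ s ∉ Sh h, qS h s ≤ 2 * β)
    (f : ℕ → S → ℝ) (hf : ∀ h < H, ∀ s, 0 ≤ f h s ∧ f h s ≤ 1) :
    ∑ h ∈ Finset.range H, ∑ s, f h s * q h s ≤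
      (∑ h ∈ Finset.range H, ∑ s ∈ Sh h, f h s * qS h s) +
        2 * β * (H : ℝ) ^ 2 * (Fintype.card S : ℝ) := by
  set n : ℝ := (Fintype.card S : ℝ) with hn
  have hn0 : (0 : ℝ) ≤ n := Nat.cast_nonneg _
  -- nonnegativity of qS
  have hqSnn : ∀ h, h ≤ H → ∀ s, 0 ≤ qS h s := by
    intro h
    induction h with
    | zero => intro _ s; rw [hqS0]; exact hq₀nn s
    | succ h ih =>
      intro hh s'
      rw [hqSrec h (by omega) s']
      exact Finset.sum_nonneg fun s _ =>
        mul_nonneg (ih (by omega) s) (hMnn h (by omega) s s')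
  -- nonnegativity of q
  have hqnn : ∀ h, h ≤ H → ∀ s, 0 ≤ q h s := by
    intro h
    induction h with
    | zero => intro _ s; rw [hq0]; exact hq₀nn s
    | succ h ih =>
      intro hh s'
      rw [hqrec h (by omega) s']
      exact Finset.sum_nonneg fun s _ =>
        mul_nonneg (ih (by omega) s) (hMnn h (by omega) s s')
  -- pointwise qS ≤ q
  have hle : ∀ h, h ≤ H → ∀ s, qS h s ≤ q h s := by
    intro h
    induction h with
    | zero => intro _ s; rw [hq0, hqS0]
    | succ h ih =>
      intro hh s'
      rw [hqSrec h (by omega) s', hqrec h (by omega) s']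
      calc ∑ s ∈ Sh h, qS h s * M h s s'
          ≤ ∑ s ∈ Sh h, q h s * M h s s' :=
            Finset.sum_le_sum fun s _ =>
              mul_le_mul_of_nonneg_right (ih (by omega) s) (hMnn h (by omega) s s')
        _ ≤ ∑ s, q h s * M h s s' :=
            Finset.sum_le_sum_of_subset_of_nonneg (Finset.subset_univ _)
              (fun s _ _ => mul_nonneg (hqnn h (by omega) s) (hMnn h (by omega) s s'))
  -- mass outside Sh h is small
  have hout : ∀ h, h < H → ∑ s ∈ (Sh h)ᶜ, qS h s ≤ 2 * β * n := by
    intro h hh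
    calc ∑ s ∈ (Sh h)ᶜ, qS h s ≤ ∑ _s ∈ (Sh h)ᶜ, (2 * β) :=
          Finset.sum_le_sum fun s hs =>
            htrunc h hh s (Finset.mem_compl.mp hs)
      _ = ((Sh h)ᶜ.card : ℝ) * (2 * β) := by
          rw [Finset.sum_const]; simp [nsmul_eq_mul]
      _ ≤ n * (2 * β) := by
          apply mul_le_mul_of_nonneg_right _ (by positivity)
          rw [hn]
          exact_mod_cast Finset.card_le_univ (Sh h)ᶜ
      _ = 2 * β * n := by ring
  -- mass difference bound
  have hD : ∀ h, h ≤ H → (∑ s, q h s) - (∑ s, qS h s) ≤ 2 * β * n * h := by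
    intro h
    induction h with
    | zero => intro _; simp [hq0, hqS0]
    | succ h ih =>
      intro hh
      have hh' : h < H := by omega
      have hrec : ∑ s, q (h + 1) s = ∑ s, q h s := by
        calc ∑ s', q (h + 1) s' = ∑ s', ∑ s, q h s * M h s s' :=
              Finset.sum_congr rfl fun s' _ => hqrec h hh' s'
          _ = ∑ s, ∑ s', q h s * M h s s' := Finset.sum_comm
          _ = ∑ s, q h s * ∑ s', M h s s' := by simp [Finset.mul_sum]
          _ = ∑ s, q h s := by
              exact Finset.sum_congr rfl fun s _ => by rw [hMrow h hh' s, mul_one]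
      have hrecS : ∑ s, qS (h + 1) s = ∑ s ∈ Sh h, qS h s := by
        calc ∑ s', qS (h + 1) s' = ∑ s', ∑ s ∈ Sh h, qS h s * M h s s' :=
              Finset.sum_congr rfl fun s' _ => hqSrec h hh' s'
          _ = ∑ s ∈ Sh h, ∑ s', qS h s * M h s s' := Finset.sum_comm
          _ = ∑ s ∈ Sh h, qS h s * ∑ s', M h s s' := by simp [Finset.mul_sum]
          _ = ∑ s ∈ Sh h, qS h s := by
              exact Finset.sum_congr rfl fun s _ => by rw [hMrow h hh' s, mul_one]
      have hsplit : (∑ s ∈ Sh h, qS h s) + ∑ s ∈ (Sh h)ᶜ, qS h s = ∑ s, qS h s :=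
        Finset.sum_add_sum_compl _ _
      have := ih (by omega)
      have hout' := hout h hh'
      rw [hrec, hrecS]
      push_cast
      nlinarith [hsplit]
  -- per-timestep bound
  have key : ∀ h, h < H →
      ∑ s, f h s * q h s ≤ (∑ s ∈ Sh h, f h s * qS h s) + 2 * β * n * H := by
    intro h hh
    have hhle : h ≤ H := le_of_lt hh
    have hsplit : (∑ s ∈ Sh h, f h s * q h s) + ∑ s ∈ (Sh h)ᶜ, f h s * q h s
        = ∑ s, f h s * q h s := Finset.sum_add_sum_compl _ _
    -- on Sh h : f*q - f*qS ≤ q - qS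
    have h1 : (∑ s ∈ Sh h, f h s * q h s) - (∑ s ∈ Sh h, f h s * qS h s)
        ≤ ∑ s ∈ Sh h, (q h s - qS h s) := by
      rw [← Finset.sum_sub_distrib]
      apply Finset.sum_le_sum
      intro s _
      have hfs := hf h hh s
      have := hle h hhle s
      nlinarith
    -- outside : f*q ≤ qS + (q - qS)
    have h2 : (∑ s ∈ (Sh h)ᶜ, f h s * q h s)
        ≤ (∑ s ∈ (Sh h)ᶜ, qS h s) + ∑ s ∈ (Sh h)ᶜ, (q h s - qS h s) := by
      rw [← Finset.sum_add_distrib]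
      apply Finset.sum_le_sum
      intro s _
      have hfs := hf h hh s
      have h3 := hle h hhle s
      have h4 := hqnn h hhle s
      nlinarith
    have hsumdiff : (∑ s ∈ Sh h, (q h s - qS h s)) + ∑ s ∈ (Sh h)ᶜ, (q h s - qS h s)
        = ∑ s, (q h s - qS h s) := Finset.sum_add_sum_compl _ _
    have hDh : ∑ s, (q h s - qS h s) ≤ 2 * β * n * h := by
      rw [Finset.sum_sub_distrib]; exact hD h hhle
    have hout' := hout h hh
    have hcast : (h : ℝ) + 1 ≤ (H : ℝ) := by exact_mod_cast hh
    have hmono : 2 * β * n * ((h : ℝ) + 1) ≤ 2 * β * n * (H : ℝ) :=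
      mul_le_mul_of_nonneg_left hcast (by positivity)
    nlinarith
  calc ∑ h ∈ Finset.range H, ∑ s, f h s * q h s
      ≤ ∑ h ∈ Finset.range H, ((∑ s ∈ Sh h, f h s * qS h s) + 2 * β * n * H) :=
        Finset.sum_le_sum fun h hh => key h (Finset.mem_range.mp hh)
    _ = (∑ h ∈ Finset.range H, ∑ s ∈ Sh h, f h s * qS h s) + H * (2 * β * n * H) := by
        rw [Finset.sum_add_distrib, Finset.sum_const, Finset.card_range, nsmul_eq_mul]
    _ = (∑ h ∈ Finset.range H, ∑ s ∈ Sh h, f h s * qS h s) + 2 * β * (H : ℝ) ^ 2 * n := by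
        ring
end

section
/- Let S be a finite type, H a natural number, α ≥ 0, and let (M_h)_{h<H}, (M'_h)_{h<H} be matrices S → S → ℝ with each M'_h substochastic (all entries nonnegative and every row sums to at most 1). Let q₀ = q'₀ : S → ℝ be a common initial vector, and define q_{h+1} := q_h ⬝ M_h and q'_{h+1} := q'_h ⬝ M'_h. Suppose ‖q_h ⬝ (M_h − M'_h)‖₁ ≤ α for every h < H. Then for every family of reward functions f_h : S → ℝ with 0 ≤ f_h s ≤ 1, |∑_{h<H} ∑_{s∈S} f_h s * (q_h s − q'_h s)| ≤ α·H²/2. -/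
lemma gauss_sum_real (n : ℕ) : (∑ h ∈ Finset.range n, (h : ℝ)) = n * (n - 1) / 2 := by
  induction n with
  | zero => simp
  | succ m ih => rw [Finset.sum_range_succ, ih]; push_cast; ring

/-- If the per-step policy-weighted model error is at most `α` at
every timestep `h < H` (with `M'` substochastic and a common initial vector),
then for rewards valued in `[0,1]` the value difference between the two induced
occupancy sequences is at most `α·H²/2`. -/
theorem value_diff_from_model_error {S : Type*} [Fintype S]
    (H : ℕ) (α : ℝ) (hα : 0 ≤ α)
    (M M' : ℕ → S → S → ℝ)
    (hM'nn : ∀ h < H, ∀ s s', 0 ≤ M' h s s')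
    (hM'row : ∀ h < H, ∀ s, ∑ s', M' h s s' ≤ 1)
    (q q' : ℕ → S → ℝ)
    (hq0 : q 0 = q' 0)
    (hqrec : ∀ h < H, ∀ s', q (h + 1) s' = ∑ s, q h s * M h s s')
    (hq'rec : ∀ h < H, ∀ s', q' (h + 1) s' = ∑ s, q' h s * M' h s s')
    (hstep : ∀ h < H, ∑ s', |∑ s, q h s * (M h s s' - M' h s s')| ≤ α)
    (f : ℕ → S → ℝ) (hf : ∀ h < H, ∀ s, 0 ≤ f h s ∧ f h s ≤ 1) :
    |∑ h ∈ Finset.range H, ∑ s, f h s * (q h s - q' h s)| ≤ α * (H : ℝ) ^ 2 / 2 := by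
  have key : ∀ h, h ≤ H → ∑ s, |q h s - q' h s| ≤ α * h := by
    intro h
    induction h with
    | zero => intro _; simp [hq0]
    | succ n ih =>
      intro hn
      have hnH : n < H := hn
      have ihn := ih hnH.le
      have expand : ∀ s', q (n+1) s' - q' (n+1) s' =
          (∑ s, q n s * (M n s s' - M' n s s')) + ∑ s, (q n s - q' n s) * M' n s s' := by
        intro s'
        rw [hqrec n hnH s', hq'rec n hnH s']
        rw [← Finset.sum_add_distrib, ← Finset.sum_sub_distrib]
        congr 1; ext s; ring
      calc ∑ s', |q (n+1) s' - q' (n+1) s'|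
          ≤ ∑ s', (|∑ s, q n s * (M n s s' - M' n s s')| + |∑ s, (q n s - q' n s) * M' n s s'|) := by
            apply Finset.sum_le_sum; intro s' _
            rw [expand s']; exact abs_add_le _ _
        _ = (∑ s', |∑ s, q n s * (M n s s' - M' n s s')|)
            + ∑ s', |∑ s, (q n s - q' n s) * M' n s s'| := Finset.sum_add_distrib
        _ ≤ α + ∑ s', ∑ s, |q n s - q' n s| * M' n s s' := by
            apply add_le_add (hstep n hnH)
            apply Finset.sum_le_sum; intro s' _
            calc |∑ s, (q n s - q' n s) * M' n s s'|
                ≤ ∑ s, |(q n s - q' n s) * M' n s s'| := Finset.abs_sum_le_sum_abs _ _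
              _ = ∑ s, |q n s - q' n s| * M' n s s' := by
                  apply Finset.sum_congr rfl; intro s _
                  rw [abs_mul, abs_of_nonneg (hM'nn n hnH s s')]
        _ = α + ∑ s, |q n s - q' n s| * ∑ s', M' n s s' := by
            rw [Finset.sum_comm]
            congr 1
            exact Finset.sum_congr rfl fun s _ => (Finset.mul_sum _ _ _).symm
        _ ≤ α + ∑ s, |q n s - q' n s| * 1 := by
            apply add_le_add le_rfl
            apply Finset.sum_le_sum; intro s _
            exact mul_le_mul_of_nonneg_left (hM'row n hnH s) (abs_nonneg _)
        _ ≤ α + α * n := by simp only [mul_one]; linarith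
        _ = α * (n + 1 : ℕ) := by push_cast; ring
  calc |∑ h ∈ Finset.range H, ∑ s, f h s * (q h s - q' h s)|
      ≤ ∑ h ∈ Finset.range H, |∑ s, f h s * (q h s - q' h s)| := Finset.abs_sum_le_sum_abs _ _
    _ ≤ ∑ h ∈ Finset.range H, α * h := by
        apply Finset.sum_le_sum; intro h hh
        rw [Finset.mem_range] at hh
        calc |∑ s, f h s * (q h s - q' h s)|
            ≤ ∑ s, |f h s * (q h s - q' h s)| := Finset.abs_sum_le_sum_abs _ _
          _ ≤ ∑ s, |q h s - q' h s| := by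
              apply Finset.sum_le_sum; intro s _
              rw [abs_mul]
              have hfs := hf h hh s
              calc |f h s| * |q h s - q' h s| ≤ 1 * |q h s - q' h s| := by
                    apply mul_le_mul_of_nonneg_right _ (abs_nonneg _)
                    rw [abs_of_nonneg hfs.1]; exact hfs.2
                _ = |q h s - q' h s| := one_mul _
          _ ≤ α * h := key h hh.le
    _ = α * ∑ h ∈ Finset.range H, (h : ℝ) := by rw [Finset.mul_sum]
    _ ≤ α * (H : ℝ) ^ 2 / 2 := by
        rw [gauss_sum_real]
        have h2 : (H : ℝ) * ((H : ℝ) - 1) / 2 ≤ (H : ℝ)^2 / 2 := by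
          nlinarith [Nat.cast_nonneg (α := ℝ) H]
        calc α * ((H : ℝ) * ((H:ℝ)-1)/2) ≤ α * ((H:ℝ)^2/2) := by
              exact mul_le_mul_of_nonneg_left h2 hα
          _ = α * (H:ℝ)^2/2 := by ring
end

section
/- Let (Ω, ℱ, μ) be a probability space, let A ≥ 1 and H ≥ 1 be natural numbers, and let E be a measurable space. Let K : Ω → (Fin H → Fin A) be uniformly distributed over the A^H functions Fin H → Fin A, and let U : Ω → E be measurable and independent of K. For each h < H let g_h : (Fin H → Fin A) → E → Fin A be a measurable function that depends on its first argument only through the coordinates before h, i.e., g_h k u = g_h k' u whenever k j = k' j for all j < h. Then μ({ω : ∀ h < H, g_h (K ω) (U ω) = K ω h}) = A^{−H}. -/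
open MeasureTheory
open scoped ENNReal

/-- A uniformly random hidden key `K` of length `H` over `A` actions,
independent of the guesser's internal randomness `U`, is guessed entirely
correctly with probability exactly `A^(−H)`, when the guess at each step `h` may
depend only on the key coordinates before `h` and on `U`. -/
theorem key_guessing_probability {Ω : Type*} [MeasurableSpace Ω]
    (μ : Measure Ω) [IsProbabilityMeasure μ]
    {E : Type*} [MeasurableSpace E]
    (A H : ℕ) (hA : 1 ≤ A) (hH : 1 ≤ H)
    (K : Ω → (Fin H → Fin A)) (hKmeas : Measurable K)
    (hKunif : ∀ k : Fin H → Fin A, μ {ω | K ω = k} = 1 / (A : ℝ≥0∞) ^ H)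
    (U : Ω → E) (hUmeas : Measurable U)
    (hindep : ProbabilityTheory.IndepFun K U μ)
    (g : Fin H → (Fin H → Fin A) → E → Fin A)
    (hgmeas : ∀ h : Fin H, Measurable (fun p : (Fin H → Fin A) × E => g h p.1 p.2))
    (hgprefix : ∀ (h : Fin H) (k k' : Fin H → Fin A) (u : E),
      (∀ j : Fin H, j < h → k j = k' j) → g h k u = g h k' u) :
    μ {ω | ∀ h : Fin H, g h (K ω) (U ω) = K ω h} = 1 / (A : ℝ≥0∞) ^ H := by
  classical
  set T : (Fin H → Fin A) → Set E := fun k => {u | ∀ h, g h k u = k h} with hT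
  -- measurability of T k
  have hTmeas : ∀ k, MeasurableSet (T k) := by
    intro k
    have : T k = ⋂ h, (fun u => g h k u) ⁻¹' {k h} := by
      ext u; simp [hT, Set.mem_iInter]
    rw [this]
    exact MeasurableSet.iInter fun h =>
      ((hgmeas h).comp (measurable_const.prodMk measurable_id))
        (measurableSet_singleton _)
  -- uniqueness: each u guesses correctly at most one key
  have huniq : ∀ u k k', u ∈ T k → u ∈ T k' → k = k' := by
    intro u k k' hk hk'
    have key : ∀ n, ∀ h : Fin H, (h : ℕ) < n → k h = k' h := by
      intro n
      induction n with
      | zero => intro h hh; omega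
      | succ n ih =>
        intro h hh
        have hg : g h k u = g h k' u := by
          refine hgprefix h k k' u fun j hj => ?_
          have hj' : (j : ℕ) < (h : ℕ) := hj
          exact ih j (by omega)
        rw [← hk h, ← hk' h]; exact hg
    funext h
    exact key H h h.isLt
  -- existence: each u guesses correctly at least one key
  have hex : ∀ u, ∃ k, u ∈ T k := by
    intro u
    have hA0 : Fin A := ⟨0, hA⟩
    set F : (Fin H → Fin A) → (Fin H → Fin A) := fun k h => g h k u with hF
    have stab : ∀ n, ∀ k0 k0' : Fin H → Fin A, ∀ h : Fin H, (h : ℕ) < n →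
        F^[n] k0 h = F^[n] k0' h := by
      intro n
      induction n with
      | zero => intro _ _ h hh; omega
      | succ n ih =>
        intro k0 k0' h hh
        rw [Function.iterate_succ_apply', Function.iterate_succ_apply']
        refine hgprefix h _ _ u fun j hj => ?_
        have hj' : (j : ℕ) < (h : ℕ) := hj
        exact ih k0 k0' j (by omega)
    refine ⟨F^[H] (fun _ => hA0), fun h => ?_⟩
    have e : F (F^[H] (fun _ => hA0)) = F^[H] (F (fun _ => hA0)) :=
      (Function.iterate_succ_apply' F H _).symm.trans
        (Function.iterate_succ_apply F H _)
    have : F (F^[H] (fun _ => hA0)) h = F^[H] (fun _ => hA0) h := by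
      rw [congrFun e h]
      exact stab H (F (fun _ => hA0)) (fun _ => hA0) h h.isLt
    exact this
  -- decompose the event according to the value of K
  have hset : {ω | ∀ h : Fin H, g h (K ω) (U ω) = K ω h}
      = ⋃ k, (K ⁻¹' {k} ∩ U ⁻¹' T k) := by
    ext ω
    simp only [Set.mem_setOf_eq, Set.mem_iUnion, Set.mem_inter_iff, Set.mem_preimage,
      Set.mem_singleton_iff]
    constructor
    · intro hω; exact ⟨K ω, rfl, fun h => hω h⟩
    · rintro ⟨k, hk, hu⟩ h; rw [hk]; exact hu h
  have hKsing : ∀ k : Fin H → Fin A, MeasurableSet ({k} : Set (Fin H → Fin A)) :=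
    fun k => measurableSet_singleton k
  rw [hset, measure_iUnion]
  · have hterm : ∀ k : Fin H → Fin A,
        μ (K ⁻¹' {k} ∩ U ⁻¹' T k) = (1 / (A : ℝ≥0∞) ^ H) * μ (U ⁻¹' T k) := by
      intro k
      rw [hindep.measure_inter_preimage_eq_mul _ _ (hKsing k) (hTmeas k)]
      congr 1
      have : K ⁻¹' {k} = {ω | K ω = k} := by ext ω; simp
      rw [this, hKunif k]
    calc ∑' k, μ (K ⁻¹' {k} ∩ U ⁻¹' T k)
        = ∑' k, (1 / (A : ℝ≥0∞) ^ H) * μ (U ⁻¹' T k) := by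
          exact tsum_congr hterm
      _ = (1 / (A : ℝ≥0∞) ^ H) * ∑' k, μ (U ⁻¹' T k) := ENNReal.tsum_mul_left
      _ = 1 / (A : ℝ≥0∞) ^ H := by
          have hdisj : Pairwise (Function.onFun Disjoint fun k => U ⁻¹' T k) := by
            intro k k' hkk'
            refine Set.disjoint_left.2 fun ω h1 h2 => hkk' ?_
            exact huniq (U ω) k k' h1 h2
          rw [← measure_iUnion hdisj (fun k => hUmeas (hTmeas k))]
          have : (⋃ k, U ⁻¹' T k) = Set.univ := by
            ext ω
            simp only [Set.mem_iUnion, Set.mem_preimage, Set.mem_univ, iff_true]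
            exact hex (U ω)
          rw [this, measure_univ, mul_one]
  · intro k k' hkk'
    refine Set.disjoint_left.2 fun ω h1 h2 => hkk' ?_
    have e1 : K ω = k := h1.1
    have e2 : K ω = k' := h2.1
    rw [← e1, ← e2]
  · exact fun k => (hKmeas (hKsing k)).inter (hUmeas (hTmeas k))
end
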